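/- arXiv:0710.3834 — 2 statements merged into one kernel-verified Lean document; each statement's English description precedes it below -/
import Mathlib

section
/- There exists a constant C > 0 (depending only on the dimension n and the indices j,k) such that for all t ∈ (0,1] and all ξ ∈ ℝⁿ, |𝓕(y ↦ y_j y_k e^{-2|y|²/t²} e^{|y|²})(ξ)| ≤ C tⁿ e^{-t²|ξ|²/16}. -/
open MeasureTheory Complex Real
open scoped RealInnerProductSpace ENNReal

noncomputable section

abbrev E (n : ℕ) := EuclideanSpace ℝ (Fin n)

namespace Stmt1Aux

lemma norm_term (a : ℝ) (s : ℂ) (m : ℕ) (x : ℝ) :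
    ‖(x:ℂ)^m * Complex.exp (-(a:ℂ) * (x:ℂ)^2 + s * (x:ℂ))‖
      = |x|^m * Real.exp (-a * x^2 + s.re * x) := by
  have h : -(a:ℂ) * (x:ℂ)^2 + s * (x:ℂ) = Complex.ofReal (-a * x^2) + s * (x:ℂ) := by
    push_cast; ring
  rw [h, norm_mul, norm_pow, Complex.norm_real, Real.norm_eq_abs,
    Complex.norm_exp]
  have hre : ((↑(-a*x^2) : ℂ) + s*↑x).re = -a*x^2 + s.re * x := by
    simp [Complex.add_re, Complex.mul_re, ← Complex.ofReal_pow]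
  rw [hre]

lemma integrable_abs_aux (a : ℝ) (ha : 0 < a) (m : ℕ) (b : ℝ) :
    Integrable (fun x : ℝ ↦ |x|^m * Real.exp (-a * x^2 + b * |x|)) := by
  have hc : 0 < a/2 := by linarith
  apply Integrable.mono' (((integrable_exp_neg_mul_sq hc).const_mul
    (Real.exp ((|b|+m)^2/(2*a)))))
  · apply Continuous.aestronglyMeasurable
    fun_prop
  · filter_upwards with x
    rw [Real.norm_eq_abs, _root_.abs_of_nonneg (mul_nonneg (pow_nonneg (abs_nonneg x) m) (Real.exp_pos _).le)]
    have h1 : |x|^m ≤ Real.exp (m * |x|) := by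
      calc |x|^m ≤ (Real.exp |x|)^m := by
            apply pow_le_pow_left₀ (abs_nonneg x)
            linarith [Real.add_one_le_exp |x|]
        _ = Real.exp (m * |x|) := by rw [← Real.exp_nat_mul]
    calc |x|^m * Real.exp (-a*x^2 + b*|x|)
        ≤ Real.exp (m * |x|) * Real.exp (-a*x^2 + b*|x|) := by
          exact mul_le_mul_of_nonneg_right h1 (Real.exp_pos _).le
      _ = Real.exp (-a*x^2 + (b+m)*|x|) := by rw [← Real.exp_add]; ring_nf
      _ ≤ Real.exp ((|b|+m)^2/(2*a)) * Real.exp (-(a/2)*x^2) := by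
          rw [← Real.exp_add]
          apply Real.exp_le_exp.2
          have h2 : (b+m)*|x| ≤ (|b|+m)*|x| := by
            have := le_abs_self b
            have := abs_nonneg x
            nlinarith
          have h3 : (|b|+(m:ℝ))*|x| ≤ (a/2)*x^2 + (|b|+(m:ℝ))^2/(2*a) := by
            calc (|b|+(m:ℝ))*|x| ≤ (2*a*((a/2)*x^2) + (|b|+(m:ℝ))^2)/(2*a) := by
                  rw [← _root_.sq_abs x, le_div_iff₀ (by positivity)]
                  nlinarith [sq_nonneg (a*|x| - (|b|+(m:ℝ)))]
              _ = (a/2)*x^2 + (|b|+(m:ℝ))^2/(2*a) := by field_simp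
          linarith

lemma cont_term (a : ℝ) (m : ℕ) (s : ℂ) :
    Continuous fun x : ℝ ↦ (x:ℂ)^m * Complex.exp (-(a:ℂ) * (x:ℂ)^2 + s * (x:ℂ)) := by
  fun_prop

lemma integrable_term (a : ℝ) (ha : 0 < a) (m : ℕ) (s : ℂ) :
    Integrable fun x : ℝ ↦ (x:ℂ)^m * Complex.exp (-(a:ℂ) * (x:ℂ)^2 + s * (x:ℂ)) := by
  apply Integrable.mono' (integrable_abs_aux a ha m |s.re|)
  · exact (cont_term a m s).aestronglyMeasurable
  · filter_upwards with x
    rw [norm_term]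
    apply mul_le_mul_of_nonneg_left _ (pow_nonneg (abs_nonneg x) m)
    apply Real.exp_le_exp.2
    have : s.re * x ≤ |s.re| * |x| := by
      calc s.re * x ≤ |s.re * x| := le_abs_self _
        _ = |s.re| * |x| := abs_mul _ _
    linarith

lemma hasDerivAt_int (a : ℝ) (ha : 0 < a) (m : ℕ) (s : ℂ) :
    HasDerivAt (fun z : ℂ ↦ ∫ x : ℝ, (x:ℂ)^m * Complex.exp (-(a:ℂ) * (x:ℂ)^2 + z * (x:ℂ)))
      (∫ x : ℝ, (x:ℂ)^(m+1) * Complex.exp (-(a:ℂ) * (x:ℂ)^2 + s * (x:ℂ))) s := by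
  have h := hasDerivAt_integral_of_dominated_loc_of_deriv_le (𝕜 := ℂ) (μ := volume)
    (F := fun z (x : ℝ) ↦ (x:ℂ)^m * Complex.exp (-(a:ℂ) * (x:ℂ)^2 + z * (x:ℂ)))
    (F' := fun z (x : ℝ) ↦ (x:ℂ)^(m+1) * Complex.exp (-(a:ℂ) * (x:ℂ)^2 + z * (x:ℂ)))
    (x₀ := s) (bound := fun x : ℝ ↦ |x|^(m+1) * Real.exp (-a * x^2 + (|s.re|+1) * |x|))
    (s := Metric.ball s 1) (Metric.ball_mem_nhds s one_pos)
    (Filter.Eventually.of_forall fun z ↦ (cont_term a m z).aestronglyMeasurable)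
    (integrable_term a ha m s)
    ((cont_term a (m+1) s).aestronglyMeasurable)
    ?_ (integrable_abs_aux a ha (m+1) (|s.re|+1)) ?_
  · exact h.2
  · filter_upwards with x z hz
    rw [norm_term]
    apply mul_le_mul_of_nonneg_left _ (pow_nonneg (abs_nonneg x) _)
    apply Real.exp_le_exp.2
    have h1 : |z.re| ≤ |s.re| + 1 := by
      have h2 : |z.re - s.re| ≤ ‖z - s‖ := by
        simpa using Complex.abs_re_le_norm (z - s)
      have h3 : ‖z - s‖ ≤ 1 := by
        rw [Metric.mem_ball, Complex.dist_eq] at hz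
        exact hz.le
      have := abs_sub_abs_le_abs_sub z.re s.re
      linarith
    have : z.re * x ≤ |z.re| * |x| := by
      calc z.re * x ≤ |z.re * x| := le_abs_self _
        _ = |z.re| * |x| := abs_mul _ _
    nlinarith [abs_nonneg x]
  · filter_upwards with x z _
    have h1 : HasDerivAt (fun z : ℂ ↦ -(a:ℂ) * (x:ℂ)^2 + z * (x:ℂ)) (x:ℂ) z :=
      (hasDerivAt_mul_const (x:ℂ)).const_add (-(a:ℂ) * (x:ℂ)^2)
    have h2 := (h1.cexp).const_mul ((x:ℂ)^m)
    exact h2.congr_deriv (by rw [pow_succ]; ring)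

lemma V0 (a : ℝ) (ha : 0 < a) (s : ℂ) :
    ∫ x : ℝ, Complex.exp (-(a:ℂ) * (x:ℂ)^2 + s * (x:ℂ))
      = ((π:ℂ) / (a:ℂ)) ^ (1/2 : ℂ) * Complex.exp (s^2 / (4*(a:ℂ))) := by
  have hb : (-(a:ℂ)).re < 0 := by simpa using ha
  have h := integral_cexp_quadratic hb s 0
  simp only [add_zero, zero_sub, div_neg, neg_neg, mul_neg] at h
  rw [← h]

lemma V1 (a : ℝ) (ha : 0 < a) (s : ℂ) :
    ∫ x : ℝ, (x:ℂ) * Complex.exp (-(a:ℂ) * (x:ℂ)^2 + s * (x:ℂ))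
      = s/(2*(a:ℂ)) * (((π:ℂ) / (a:ℂ)) ^ (1/2 : ℂ) * Complex.exp (s^2 / (4*(a:ℂ)))) := by
  have hd := hasDerivAt_int a ha 0 s
  simp only [zero_add, pow_zero, one_mul, pow_one] at hd
  have hfe : (fun z : ℂ ↦ ∫ x : ℝ, Complex.exp (-(a:ℂ) * (x:ℂ)^2 + z * (x:ℂ)))
      = fun z : ℂ ↦ ((π:ℂ) / (a:ℂ)) ^ (1/2 : ℂ) * Complex.exp (z^2 / (4*(a:ℂ))) :=
    funext fun z ↦ V0 a ha z
  rw [hfe] at hd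
  have h1 : HasDerivAt (fun z : ℂ ↦ z^2 / (4*(a:ℂ))) (2*s / (4*(a:ℂ))) s := by
    have := (hasDerivAt_pow 2 s).div_const (4*(a:ℂ))
    simpa using this
  have he := (h1.cexp).const_mul (((π:ℂ) / (a:ℂ)) ^ (1/2 : ℂ))
  rw [hd.unique he]
  ring

lemma V2 (a : ℝ) (ha : 0 < a) (s : ℂ) :
    ∫ x : ℝ, (x:ℂ)^2 * Complex.exp (-(a:ℂ) * (x:ℂ)^2 + s * (x:ℂ))
      = (s^2/(4*(a:ℂ)^2) + 1/(2*(a:ℂ)))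
        * (((π:ℂ) / (a:ℂ)) ^ (1/2 : ℂ) * Complex.exp (s^2 / (4*(a:ℂ)))) := by
  have hd := hasDerivAt_int a ha 1 s
  simp only [pow_one, one_add_one_eq_two] at hd
  have hfe : (fun z : ℂ ↦ ∫ x : ℝ, (x:ℂ) * Complex.exp (-(a:ℂ) * (x:ℂ)^2 + z * (x:ℂ)))
      = fun z : ℂ ↦ z/(2*(a:ℂ)) * (((π:ℂ) / (a:ℂ)) ^ (1/2 : ℂ) * Complex.exp (z^2 / (4*(a:ℂ)))) :=
    funext fun z ↦ V1 a ha z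
  rw [hfe] at hd
  have h1 : HasDerivAt (fun z : ℂ ↦ z^2 / (4*(a:ℂ))) (2*s / (4*(a:ℂ))) s := by
    have := (hasDerivAt_pow 2 s).div_const (4*(a:ℂ))
    simpa using this
  have h2 := (h1.cexp).const_mul (((π:ℂ) / (a:ℂ)) ^ (1/2 : ℂ))
  have h3 : HasDerivAt (fun z : ℂ ↦ z/(2*(a:ℂ))) (1/(2*(a:ℂ))) s := by
    simpa using (hasDerivAt_id s).div_const (2*(a:ℂ))
  have he := h3.mul h2
  rw [hd.unique he]
  have hane : (a:ℂ) ≠ 0 := Complex.ofReal_ne_zero.2 ha.ne'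
  field_simp
  ring

lemma normE0 (a : ℝ) (ha : 0 < a) (r : ℝ) :
    ‖((π:ℂ)/(a:ℂ)) ^ (1/2 : ℂ) * Complex.exp ((-Complex.I*(r:ℂ))^2 / (4*(a:ℂ)))‖
      = Real.sqrt (π/a) * Real.exp (-(r^2)/(4*a)) := by
  have hpa : (0:ℝ) < π/a := div_pos Real.pi_pos ha
  have h2 : (-Complex.I*(r:ℂ))^2 / (4*(a:ℂ)) = (((-(r^2)/(4*a) : ℝ)) : ℂ) := by
    push_cast
    rw [mul_pow, neg_pow, Complex.I_sq]
    ring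
  rw [norm_mul, h2]
  congr 1
  · rw [show ((π:ℂ)/(a:ℂ)) = (((π/a : ℝ)) : ℂ) by push_cast; ring]
    rw [Complex.norm_cpow_eq_rpow_re_of_pos hpa]
    simp [Real.sqrt_eq_rpow]
  · rw [Complex.norm_exp, Complex.ofReal_re]

lemma prod_pow_ite {n : ℕ} (j k : Fin n) (f : Fin n → ℂ) :
    ∏ i, f i ^ ((if i = j then 1 else 0) + (if i = k then 1 else 0)) = f j * f k := by
  simp only [pow_add]
  rw [Finset.prod_mul_distrib]
  congr 1 <;>
  · simp only [pow_ite, pow_one, pow_zero]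
    simp [Finset.prod_ite_eq']


lemma integral_eq (n : ℕ) (j k : Fin n) (a : ℝ) (ξ : EuclideanSpace ℝ (Fin n)) :
    (∫ y : EuclideanSpace ℝ (Fin n),
      (Complex.ofReal (y j) * Complex.ofReal (y k)) *
        Complex.exp (Complex.ofReal (-a * ‖y‖^2)) *
        Complex.exp (-Complex.I * Complex.ofReal (inner ℝ y ξ : ℝ)))
    = ∏ i, ∫ x : ℝ, (x:ℂ)^((if i = j then 1 else 0) + (if i = k then 1 else 0)) *
        Complex.exp (-(a:ℂ) * (x:ℂ)^2 + (-Complex.I * ((ξ i : ℝ):ℂ)) * (x:ℂ)) := by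
  have hpt : ∀ y : EuclideanSpace ℝ (Fin n),
      (Complex.ofReal (y j) * Complex.ofReal (y k)) *
        Complex.exp (Complex.ofReal (-a * ‖y‖^2)) *
        Complex.exp (-Complex.I * Complex.ofReal (inner ℝ y ξ : ℝ))
      = ∏ i, ((y i : ℝ):ℂ)^((if i = j then 1 else 0) + (if i = k then 1 else 0)) *
          Complex.exp (-(a:ℂ) * ((y i : ℝ):ℂ)^2 + (-Complex.I * ((ξ i : ℝ):ℂ)) * ((y i : ℝ):ℂ)) := by
    intro y
    have hn : ‖y‖^2 = ∑ i, (y i)^2 := by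
      rw [EuclideanSpace.norm_eq, Real.sq_sqrt (Finset.sum_nonneg fun i _ ↦ by positivity)]
      simp [Real.norm_eq_abs, sq_abs]
    have hi : (inner ℝ y ξ : ℝ) = ∑ i, y i * ξ i := by
      simp [PiLp.inner_apply, RCLike.inner_apply, conj_trivial]
      exact Finset.sum_congr rfl fun i _ ↦ mul_comm _ _
    rw [Finset.prod_mul_distrib, prod_pow_ite j k (fun i ↦ ((y i : ℝ):ℂ)),
      ← Complex.exp_sum, mul_assoc, ← Complex.exp_add]
    congr 2
    rw [hn, hi]
    push_cast
    rw [Finset.sum_add_distrib]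
    congr 1
    · rw [Finset.mul_sum]
    · rw [Finset.mul_sum]
      exact Finset.sum_congr rfl fun i _ ↦ by ring
  simp_rw [hpt]
  rw [← ((EuclideanSpace.volume_preserving_symm_measurableEquiv_toLp (Fin n)).symm _).integral_comp
    (MeasurableEquiv.measurableEmbedding _)]
  rw [show (fun v : Fin n → ℝ ↦ ∏ i, (((((MeasurableEquiv.toLp 2 (Fin n → ℝ)).symm.symm v) i : ℝ)):ℂ)
        ^ ((if i = j then 1 else 0) + (if i = k then 1 else 0)) *
        Complex.exp (-(a:ℂ) * (((((MeasurableEquiv.toLp 2 (Fin n → ℝ)).symm.symm v) i : ℝ)):ℂ)^2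
          + (-Complex.I * ((ξ i : ℝ):ℂ)) * (((((MeasurableEquiv.toLp 2 (Fin n → ℝ)).symm.symm v) i : ℝ)):ℂ)))
      = fun v : Fin n → ℝ ↦ ∏ i, ((v i : ℝ):ℂ)
        ^ ((if i = j then 1 else 0) + (if i = k then 1 else 0)) *
        Complex.exp (-(a:ℂ) * ((v i : ℝ):ℂ)^2 + (-Complex.I * ((ξ i : ℝ):ℂ)) * ((v i : ℝ):ℂ))
    from by
      funext v
      rfl]
  exact MeasureTheory.integral_fintype_prod_eq_prod (ι := Fin n)
    (f := fun i (x : ℝ) ↦ (x:ℂ)^((if i = j then 1 else 0) + (if i = k then 1 else 0)) *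
      Complex.exp (-(a:ℂ) * (x:ℂ)^2 + (-Complex.I * ((ξ i : ℝ):ℂ)) * (x:ℂ)))


lemma bound0 (a : ℝ) (ha : 0 < a) (r : ℝ) :
    ‖∫ x : ℝ, Complex.exp (-(a:ℂ) * (x:ℂ)^2 + (-Complex.I * (r:ℂ)) * (x:ℂ))‖
      = Real.sqrt (π/a) * Real.exp (-(r^2)/(4*a)) := by
  rw [V0 a ha, normE0 a ha]

lemma bound1 (a : ℝ) (ha1 : 1 ≤ a) (r : ℝ) :
    ‖∫ x : ℝ, (x:ℂ)^1 * Complex.exp (-(a:ℂ) * (x:ℂ)^2 + (-Complex.I * (r:ℂ)) * (x:ℂ))‖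
      ≤ (Real.sqrt (π/a) * Real.exp (-(r^2)/(4*a))) * (1 + r^2/a) := by
  have ha : 0 < a := lt_of_lt_of_le one_pos ha1
  simp only [pow_one]
  rw [V1 a ha, norm_mul, normE0 a ha, mul_comm]
  apply mul_le_mul_of_nonneg_left _ (by positivity)
  have hnrm : ‖-Complex.I * (r:ℂ) / (2*(a:ℂ))‖ = |r| / (2*a) := by
    rw [norm_div, norm_mul, norm_neg, Complex.norm_I, one_mul, Complex.norm_real,
      Real.norm_eq_abs, show ((2:ℂ)*(a:ℂ)) = (((2*a : ℝ)):ℂ) by push_cast; ring,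
      Complex.norm_real, Real.norm_eq_abs, _root_.abs_of_pos (show (0:ℝ) < 2*a by linarith)]
  rw [hnrm]
  have h : |r| ≤ 2*a + 2*r^2 := by nlinarith [sq_nonneg (|r| - 1), _root_.sq_abs r]
  calc |r|/(2*a) ≤ (2*a + 2*r^2)/(2*a) := by gcongr
    _ = 1 + r^2/a := by field_simp

lemma bound2 (a : ℝ) (ha1 : 1 ≤ a) (r : ℝ) :
    ‖∫ x : ℝ, (x:ℂ)^2 * Complex.exp (-(a:ℂ) * (x:ℂ)^2 + (-Complex.I * (r:ℂ)) * (x:ℂ))‖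
      ≤ (Real.sqrt (π/a) * Real.exp (-(r^2)/(4*a))) * ((1 + r^2/a) * (1 + r^2/a)) := by
  have ha : 0 < a := lt_of_lt_of_le one_pos ha1
  rw [V2 a ha, norm_mul, normE0 a ha, mul_comm]
  apply mul_le_mul_of_nonneg_left _ (by positivity)
  have hco : ((-Complex.I*(r:ℂ))^2/(4*(a:ℂ)^2) + 1/(2*(a:ℂ)))
      = (((1/(2*a) - r^2/(4*a^2) : ℝ)):ℂ) := by
    push_cast
    rw [mul_pow, neg_pow, Complex.I_sq]
    ring
  rw [hco, Complex.norm_real, Real.norm_eq_abs]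
  have e1 : 1/(2*a) ≤ 1 := by rw [div_le_one (by positivity)]; linarith
  have e2 : r^2/(4*a^2) ≤ r^2/a := by
    apply div_le_div_of_nonneg_left (sq_nonneg r) ha
    nlinarith
  have e3 : (0:ℝ) ≤ 1/(2*a) := by positivity
  have e4 : (0:ℝ) ≤ r^2/(4*a^2) := by positivity
  have e5 : (0:ℝ) ≤ r^2/a := by positivity
  have h1 : |1/(2*a) - r^2/(4*a^2)| ≤ 1/(2*a) + r^2/(4*a^2) := by
    rw [abs_le]; constructor <;> linarith
  have h2 : 1 + r^2/a ≤ (1 + r^2/a) * (1 + r^2/a) := by nlinarith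
  linarith

end Stmt1Aux

/-- uniform Gaussian bound for the Fourier transform of
`y ↦ y_j y_k e^{-2|y|²/t²} e^{|y|²}`, `t ∈ (0,1]`. -/


theorem stmt_1 (n : ℕ) (j k : Fin n) :
    ∃ C > 0, ∀ t ∈ Set.Ioc (0:ℝ) 1, ∀ ξ : E n,
      ‖∫ y : E n,
          (Complex.ofReal (y j) * Complex.ofReal (y k)) *
            Complex.exp (Complex.ofReal (-2 * ‖y‖ ^ 2 / t ^ 2 + ‖y‖ ^ 2)) *
            Complex.exp (-Complex.I * Complex.ofReal ⟪y, ξ⟫)‖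
        ≤ C * t ^ n * Real.exp (-(t ^ 2 * ‖ξ‖ ^ 2) / 16) := by
  refine ⟨256 * Real.sqrt π ^ n, by positivity, fun t ht ξ ↦ ?_⟩
  obtain ⟨ht0, ht1⟩ := ht
  have ht2 : (0:ℝ) < t^2 := by positivity
  obtain ⟨a, ha_def⟩ : ∃ a : ℝ, a = 2/t^2 - 1 := ⟨_, rfl⟩
  have hat : a * t^2 = 2 - t^2 := by rw [ha_def]; field_simp
  have ht1' : t^2 ≤ 1 := by nlinarith
  have ha1 : 1 ≤ a := by
    have h2 : (2:ℝ) ≤ 2/t^2 := by rw [le_div_iff₀ ht2]; nlinarith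
    rw [ha_def]; linarith
  have ha0 : 0 < a := by linarith
  have hexp : ∀ y : E n, -2 * ‖y‖^2 / t^2 + ‖y‖^2 = -a * ‖y‖^2 := by
    intro y; rw [ha_def]; field_simp; ring
  simp_rw [hexp]
  rw [Stmt1Aux.integral_eq n j k a ξ]
  obtain ⟨N, hN_def⟩ : ∃ N : ℝ, N = ‖ξ‖^2 := ⟨_, rfl⟩
  rw [← hN_def]
  have hξsum : ∑ i, (ξ i)^2 = N := by
    rw [hN_def, EuclideanSpace.norm_eq, Real.sq_sqrt (Finset.sum_nonneg fun i _ ↦ by positivity)]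
    simp [Real.norm_eq_abs, _root_.sq_abs]
  have hN : 0 ≤ N := by rw [hN_def]; positivity
  have hj2 : (ξ j)^2 ≤ N := by
    rw [← hξsum]
    exact Finset.single_le_sum (f := fun i ↦ (ξ i)^2) (fun i _ ↦ sq_nonneg (ξ i)) (Finset.mem_univ j)
  have hk2 : (ξ k)^2 ≤ N := by
    rw [← hξsum]
    exact Finset.single_le_sum (f := fun i ↦ (ξ i)^2) (fun i _ ↦ sq_nonneg (ξ i)) (Finset.mem_univ k)
  have key : ∀ i : Fin n,
      ‖∫ x : ℝ, (x:ℂ)^((if i = j then 1 else 0) + (if i = k then 1 else 0)) *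
          Complex.exp (-(a:ℂ) * (x:ℂ)^2 + (-Complex.I * ((ξ i : ℝ):ℂ)) * (x:ℂ))‖
      ≤ (Real.sqrt (π/a) * Real.exp (-((ξ i)^2)/(4*a))) *
        ((if i = j then 1 + (ξ i)^2/a else 1) * (if i = k then 1 + (ξ i)^2/a else 1)) := by
    intro i
    by_cases h1 : i = j <;> by_cases h2 : i = k
    · simp only [if_pos h1, if_pos h2]
      simpa using Stmt1Aux.bound2 a ha1 (ξ i)
    · simp only [if_pos h1, if_neg h2]
      simpa using Stmt1Aux.bound1 a ha1 (ξ i)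
    · simp only [if_neg h1, if_pos h2]
      simpa using Stmt1Aux.bound1 a ha1 (ξ i)
    · simp only [if_neg h1, if_neg h2]
      simpa using le_of_eq (Stmt1Aux.bound0 a ha0 (ξ i))
  have hfac : ∀ r : ℝ, 1 + r^2/a ≤ 16 * Real.exp (r^2/(16*a)) := by
    intro r
    have h := Real.add_one_le_exp (r^2/(16*a))
    have hv : r^2/a = 16*(r^2/(16*a)) := by ring
    have hvp : 0 ≤ r^2/(16*a) := by positivity
    nlinarith
  have hs1 : Real.sqrt (π/a) ≤ Real.sqrt π * t := by
    have h : π/a ≤ π * t^2 := by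
      rw [div_le_iff₀ ha0]
      nlinarith [Real.pi_pos]
    calc Real.sqrt (π/a) ≤ Real.sqrt (π*t^2) := Real.sqrt_le_sqrt h
      _ = Real.sqrt π * t := by rw [Real.sqrt_mul Real.pi_pos.le, Real.sqrt_sq ht0.le]
  calc ‖∏ i, ∫ x : ℝ, (x:ℂ)^((if i = j then 1 else 0) + (if i = k then 1 else 0)) *
          Complex.exp (-(a:ℂ) * (x:ℂ)^2 + (-Complex.I * ((ξ i : ℝ):ℂ)) * (x:ℂ))‖
      = ∏ i, ‖∫ x : ℝ, (x:ℂ)^((if i = j then 1 else 0) + (if i = k then 1 else 0)) *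
          Complex.exp (-(a:ℂ) * (x:ℂ)^2 + (-Complex.I * ((ξ i : ℝ):ℂ)) * (x:ℂ))‖ :=
        norm_prod _ _
    _ ≤ ∏ i, ((Real.sqrt (π/a) * Real.exp (-((ξ i)^2)/(4*a))) *
        ((if i = j then 1 + (ξ i)^2/a else 1) * (if i = k then 1 + (ξ i)^2/a else 1))) :=
        Finset.prod_le_prod (fun i _ ↦ norm_nonneg _) (fun i _ ↦ key i)
    _ = (Real.sqrt (π/a)^n * Real.exp (-N/(4*a))) * ((1 + (ξ j)^2/a) * (1 + (ξ k)^2/a)) := by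
        rw [Finset.prod_mul_distrib, Finset.prod_mul_distrib, Finset.prod_mul_distrib,
          Finset.prod_const, Finset.card_univ, Fintype.card_fin, ← Real.exp_sum,
          Finset.prod_ite_eq', Finset.prod_ite_eq']
        simp only [Finset.mem_univ, if_true]
        congr 2
        rw [← Finset.sum_div, Finset.sum_neg_distrib, hξsum]
    _ ≤ ((Real.sqrt π * t)^n * Real.exp (-N/(4*a))) *
        ((16*Real.exp ((ξ j)^2/(16*a))) * (16*Real.exp ((ξ k)^2/(16*a)))) := by
        apply mul_le_mul _ _ (by positivity) (by positivity)
        · exact mul_le_mul_of_nonneg_right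
            (pow_le_pow_left₀ (Real.sqrt_nonneg _) hs1 n) (Real.exp_pos _).le
        · exact mul_le_mul (hfac (ξ j)) (hfac (ξ k)) (by positivity) (by positivity)
    _ = (Real.sqrt π^n * t^n) *
        (256 * Real.exp (-N/(4*a) + (ξ j)^2/(16*a) + (ξ k)^2/(16*a))) := by
        rw [mul_pow, Real.exp_add, Real.exp_add]; ring
    _ ≤ (Real.sqrt π^n * t^n) * (256 * Real.exp (-(t^2*N)/16)) := by
        have h1 : (ξ j)^2/(16*a) ≤ N/(16*a) := by gcongr
        have h2 : (ξ k)^2/(16*a) ≤ N/(16*a) := by gcongr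
        have h3 : -N/(4*a) + N/(16*a) + N/(16*a) = -(N/(8*a)) := by ring
        have h4 : t^2*N/16 ≤ N/(8*a) := by
          rw [div_le_div_iff₀ (by norm_num) (by positivity)]
          nlinarith [mul_le_mul_of_nonneg_left (show a*t^2 ≤ 2 by linarith) hN]
        have harg : -N/(4*a) + (ξ j)^2/(16*a) + (ξ k)^2/(16*a) ≤ -(t^2*N)/16 := by
          have : -(t^2*N)/16 = -(t^2*N/16) := by ring
          rw [this]
          linarith
        exact mul_le_mul_of_nonneg_left
          (mul_le_mul_of_nonneg_left (Real.exp_le_exp.2 harg) (by norm_num)) (by positivity)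
    _ = 256 * Real.sqrt π ^ n * t ^ n * Real.exp (-(t^2*N)/16) := by ring
end
end

section
/- Let v : ℝⁿ → (0,∞) be measurable, submultiplicative, and satisfy v(tξ) ≤ C v(ξ) for all t ∈ [0,1], ξ ∈ ℝⁿ, with C independent of t and ξ. Let H ∈ L¹_{(v)}(ℝⁿ) be nonnegative and define ĝ(ξ) = ∫₀¹ ∫ (1-t) H(η) e^{-|ξ - tη|²/16} dη dt. Then ĝ ∈ L¹_{(v)}(ℝⁿ) and ∫ ĝ(ξ) v(ξ) dξ ≤ C' ∫ H(η) v(η) dη, where C' depends only on C, n and ∫ e^{-|ξ|²/16} v(ξ)dξ. -/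
open MeasureTheory Complex Real
open scoped RealInnerProductSpace ENNReal

noncomputable section

set_option maxHeartbeats 1000000 in
/-- the majorant `ĝ(ξ) = ∫₀¹∫ (1-t) H(η) e^{-|ξ-tη|²/16} dη dt` belongs to
`L¹_{(v)}` with `∫ ĝ v ≤ C' ∫ H v`, where `C' = C ∫ e^{-|ξ|²/16} v(ξ) dξ`. -/
theorem stmt_6 (n : ℕ) (C : ℝ) (hC : 0 < C)
    (v : E n → ℝ) (hv_meas : Measurable v) (hv_pos : ∀ ξ, 0 < v ξ)
    (hv_sub : ∀ ξ η, v (ξ + η) ≤ v ξ * v η)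
    (hv_scale : ∀ t ∈ Set.Icc (0:ℝ) 1, ∀ ξ, v (t • ξ) ≤ C * v ξ)
    (hv_gauss : Integrable (fun ξ : E n => Real.exp (-‖ξ‖ ^ 2 / 16) * v ξ))
    (H : E n → ℝ) (hH_meas : Measurable H) (hH_nonneg : ∀ η, 0 ≤ H η)
    (hH : Integrable (fun η => H η * v η)) :
    Integrable (fun ξ : E n =>
      (∫ t in Set.Ioo (0:ℝ) 1, ∫ η, (1 - t) * H η * Real.exp (-‖ξ - t • η‖ ^ 2 / 16)) * v ξ) ∧
    ∫ ξ : E n,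
        (∫ t in Set.Ioo (0:ℝ) 1, ∫ η, (1 - t) * H η * Real.exp (-‖ξ - t • η‖ ^ 2 / 16)) * v ξ
      ≤ (C * ∫ ξ : E n, Real.exp (-‖ξ‖ ^ 2 / 16) * v ξ) * ∫ η, H η * v η := by
  have hv0 : ∀ ξ, 0 ≤ v ξ := fun ξ => (hv_pos ξ).le
  set G : ℝ := ∫ ξ : E n, Real.exp (-‖ξ‖ ^ 2 / 16) * v ξ with hGdef
  have hG0 : 0 ≤ G :=
    integral_nonneg fun ξ => mul_nonneg (Real.exp_pos _).le (hv0 ξ)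
  have hHv0 : 0 ≤ ∫ η, H η * v η :=
    integral_nonneg fun η => mul_nonneg (hH_nonneg η) (hv0 η)
  set f : E n → ℝ := fun ξ =>
    ∫ t in Set.Ioo (0:ℝ) 1, ∫ η, (1 - t) * H η * Real.exp (-‖ξ - t • η‖ ^ 2 / 16) with hfdef
  have hf_nonneg : ∀ ξ, 0 ≤ f ξ := by
    intro ξ
    refine setIntegral_nonneg measurableSet_Ioo fun t ht => integral_nonneg fun η => ?_
    exact mul_nonneg (mul_nonneg (by linarith [ht.2]) (hH_nonneg η)) (Real.exp_pos _).le
  -- measurability of the real kernel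
  have hΦm : Measurable (fun q : (E n × ℝ) × E n =>
      (1 - q.1.2) * H q.2 * Real.exp (-‖q.1.1 - q.1.2 • q.2‖ ^ 2 / 16)) := by
    have hcont : Continuous fun q : (E n × ℝ) × E n =>
        Real.exp (-‖q.1.1 - q.1.2 • q.2‖ ^ 2 / 16) := by fun_prop
    exact ((measurable_const.sub (measurable_snd.comp measurable_fst)).mul
      (hH_meas.comp measurable_snd)).mul hcont.measurable
  have hfsm : StronglyMeasurable f := by
    have h1 : StronglyMeasurable (fun q : E n × ℝ =>
        ∫ η, (1 - q.2) * H η * Real.exp (-‖q.1 - q.2 • η‖ ^ 2 / 16)) :=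
      hΦm.stronglyMeasurable.integral_prod_right'
    exact h1.integral_prod_right' (ν := volume.restrict (Set.Ioo (0:ℝ) 1))
  have hFm : AEStronglyMeasurable (fun ξ => f ξ * v ξ) volume :=
    (hfsm.mul hv_meas.stronglyMeasurable).aestronglyMeasurable
  -- the ENNReal kernel
  set Nf : ℝ → E n → E n → ℝ≥0∞ := fun t η ξ =>
    (‖(1 - t) * H η * Real.exp (-‖ξ - t • η‖ ^ 2 / 16)‖₊ : ℝ≥0∞) * (‖v ξ‖₊ : ℝ≥0∞) with hNfdef
  have hNm : Measurable (fun q : (E n × ℝ) × E n => Nf q.1.2 q.2 q.1.1) :=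
    hΦm.enorm.mul ((hv_meas.comp (measurable_fst.comp measurable_fst)).enorm)
  -- pointwise bound : ofReal (f ξ * v ξ) ≤ iterated lintegral of Nf
  have step1 : ∀ ξ, ENNReal.ofReal (f ξ * v ξ) ≤
      ∫⁻ t in Set.Ioo (0:ℝ) 1, ∫⁻ η, Nf t η ξ := by
    intro ξ
    have hvne : (‖v ξ‖₊ : ℝ≥0∞) ≠ ∞ := ENNReal.coe_ne_top
    rw [ENNReal.ofReal_mul' (hv0 ξ)]
    calc ENNReal.ofReal (f ξ) * ENNReal.ofReal (v ξ)
        ≤ (∫⁻ t in Set.Ioo (0:ℝ) 1,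
            ∫⁻ η, (‖(1 - t) * H η * Real.exp (-‖ξ - t • η‖ ^ 2 / 16)‖₊ : ℝ≥0∞))
            * (‖v ξ‖₊ : ℝ≥0∞) := by
          gcongr
          · exact le_trans (Real.ofReal_le_enorm _)
              (le_trans (enorm_integral_le_lintegral_enorm _)
                (lintegral_mono fun t => enorm_integral_le_lintegral_enorm _))
          · exact Real.ofReal_le_enorm _
      _ = ∫⁻ t in Set.Ioo (0:ℝ) 1, ∫⁻ η, Nf t η ξ := by
          rw [← lintegral_mul_const' _ _ hvne]
          refine lintegral_congr fun t => ?_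
          rw [← lintegral_mul_const' _ _ hvne]
  -- translation estimate
  have htrans : ∀ a : E n,
      (∫⁻ ξ, ENNReal.ofReal (Real.exp (-‖ξ - a‖ ^ 2 / 16) * v ξ)) ≤
        ENNReal.ofReal (v a) * ENNReal.ofReal G := by
    intro a
    have hshift := lintegral_add_right_eq_self
      (μ := (volume : Measure (E n)))
      (fun ξ => ENNReal.ofReal (Real.exp (-‖ξ - a‖ ^ 2 / 16) * v ξ)) a
    rw [← hshift]
    simp only [add_sub_cancel_right]
    calc (∫⁻ x, ENNReal.ofReal (Real.exp (-‖x‖ ^ 2 / 16) * v (x + a)))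
        ≤ ∫⁻ x, ENNReal.ofReal (v a) * ENNReal.ofReal (Real.exp (-‖x‖ ^ 2 / 16) * v x) := by
          refine lintegral_mono fun x => ?_
          rw [← ENNReal.ofReal_mul (hv0 a)]
          refine ENNReal.ofReal_le_ofReal ?_
          have h1 := hv_sub x a
          have h2 := (Real.exp_pos (-‖x‖ ^ 2 / 16)).le
          nlinarith [hv0 x, hv0 a, hv_pos (x + a)]
      _ = ENNReal.ofReal (v a) * ENNReal.ofReal G := by
          rw [lintegral_const_mul' _ _ ENNReal.ofReal_ne_top,
            ← ofReal_integral_eq_lintegral_ofReal hv_gauss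
              (ae_of_all _ fun ξ => mul_nonneg (Real.exp_pos _).le (hv0 ξ))]
  -- key bound for fixed t ∈ (0,1) and η
  have key : ∀ t ∈ Set.Ioo (0:ℝ) 1, ∀ η : E n,
      (∫⁻ ξ, Nf t η ξ) ≤ ENNReal.ofReal (H η * v η) * ENNReal.ofReal (C * G) := by
    intro t ht η
    have h1t : 0 ≤ 1 - t := by linarith [ht.2]
    have hpt : ∀ ξ : E n, Nf t η ξ =
        ENNReal.ofReal ((1 - t) * H η) *
          ENNReal.ofReal (Real.exp (-‖ξ - t • η‖ ^ 2 / 16) * v ξ) := by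
      intro ξ
      have hk : (0:ℝ) ≤ (1 - t) * H η * Real.exp (-‖ξ - t • η‖ ^ 2 / 16) :=
        mul_nonneg (mul_nonneg h1t (hH_nonneg η)) (Real.exp_pos _).le
      simp only [hNfdef]
      rw [← enorm_eq_nnnorm, ← enorm_eq_nnnorm, Real.enorm_eq_ofReal hk, Real.enorm_eq_ofReal (hv0 ξ),
        ← ENNReal.ofReal_mul hk,
        ← ENNReal.ofReal_mul (mul_nonneg h1t (hH_nonneg η))]
      exact congrArg _ (by ring)
    calc (∫⁻ ξ, Nf t η ξ)
        = ENNReal.ofReal ((1 - t) * H η) *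
            ∫⁻ ξ, ENNReal.ofReal (Real.exp (-‖ξ - t • η‖ ^ 2 / 16) * v ξ) := by
          simp_rw [hpt]
          exact lintegral_const_mul' _ _ ENNReal.ofReal_ne_top
      _ ≤ ENNReal.ofReal (H η) * (ENNReal.ofReal (v (t • η)) * ENNReal.ofReal G) := by
          gcongr
          · nlinarith [mul_nonneg ht.1.le (hH_nonneg η)]
          · exact htrans (t • η)
      _ ≤ ENNReal.ofReal (H η) * (ENNReal.ofReal (C * v η) * ENNReal.ofReal G) := by
          gcongr
          exact hv_scale t ⟨ht.1.le, ht.2.le⟩ η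
      _ = ENNReal.ofReal (H η * v η) * ENNReal.ofReal (C * G) := by
          rw [← ENNReal.ofReal_mul (mul_nonneg hC.le (hv0 η)),
            ← ENNReal.ofReal_mul (hH_nonneg η),
            ← ENNReal.ofReal_mul (mul_nonneg (hH_nonneg η) (hv0 η))]
          exact congrArg _ (by ring)
  -- main lintegral estimate
  have hmain : (∫⁻ ξ, ENNReal.ofReal (f ξ * v ξ)) ≤
      ENNReal.ofReal ((C * G) * ∫ η, H η * v η) := by
    have hswap1 : (∫⁻ ξ, ∫⁻ t in Set.Ioo (0:ℝ) 1, ∫⁻ η, Nf t η ξ) =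
        ∫⁻ t in Set.Ioo (0:ℝ) 1, ∫⁻ ξ, ∫⁻ η, Nf t η ξ := by
      have hm1 : Measurable (fun q : E n × ℝ => ∫⁻ η, Nf q.2 η q.1) :=
        Measurable.lintegral_prod_right' hNm
      refine lintegral_lintegral_swap ?_
      exact hm1.aemeasurable
    have hswap2 : ∀ t : ℝ, (∫⁻ ξ, ∫⁻ η, Nf t η ξ) = ∫⁻ η, ∫⁻ ξ, Nf t η ξ := by
      intro t
      have hm2 : Measurable (fun p : E n × E n => Nf t p.2 p.1) :=
        hNm.comp ((measurable_fst.prodMk measurable_const).prodMk measurable_snd)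
      refine lintegral_lintegral_swap ?_
      exact hm2.aemeasurable
    calc (∫⁻ ξ, ENNReal.ofReal (f ξ * v ξ))
        ≤ ∫⁻ ξ, ∫⁻ t in Set.Ioo (0:ℝ) 1, ∫⁻ η, Nf t η ξ := lintegral_mono step1
      _ = ∫⁻ t in Set.Ioo (0:ℝ) 1, ∫⁻ ξ, ∫⁻ η, Nf t η ξ := hswap1
      _ = ∫⁻ t in Set.Ioo (0:ℝ) 1, ∫⁻ η, ∫⁻ ξ, Nf t η ξ := by
          exact lintegral_congr fun t => hswap2 t
      _ ≤ ∫⁻ _t in Set.Ioo (0:ℝ) 1,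
            ENNReal.ofReal (∫ η, H η * v η) * ENNReal.ofReal (C * G) := by
          refine setLIntegral_mono' measurableSet_Ioo fun t ht => ?_
          calc (∫⁻ η, ∫⁻ ξ, Nf t η ξ)
              ≤ ∫⁻ η, ENNReal.ofReal (H η * v η) * ENNReal.ofReal (C * G) :=
                lintegral_mono fun η => key t ht η
            _ = ENNReal.ofReal (∫ η, H η * v η) * ENNReal.ofReal (C * G) := by
                rw [lintegral_mul_const' _ _ ENNReal.ofReal_ne_top,
                  ← ofReal_integral_eq_lintegral_ofReal hH
                    (ae_of_all _ fun η => mul_nonneg (hH_nonneg η) (hv0 η))]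
      _ = ENNReal.ofReal ((C * G) * ∫ η, H η * v η) := by
          rw [setLIntegral_const, Real.volume_Ioo, ← ENNReal.ofReal_mul hHv0]
          norm_num
          exact congrArg _ (by ring)
  have hint : Integrable (fun ξ => f ξ * v ξ) := by
    refine ⟨hFm, ?_⟩
    rw [hasFiniteIntegral_iff_ofReal
      (ae_of_all _ fun ξ => mul_nonneg (hf_nonneg ξ) (hv0 ξ))]
    exact lt_of_le_of_lt hmain ENNReal.ofReal_lt_top
  refine ⟨hint, ?_⟩
  rw [integral_eq_lintegral_of_nonneg_ae
    (ae_of_all _ fun ξ => mul_nonneg (hf_nonneg ξ) (hv0 ξ)) hFm]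
  exact ENNReal.toReal_le_of_le_ofReal (mul_nonneg (mul_nonneg hC.le hG0) hHv0) hmain
end
end
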